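/- The only positive integer y for which 8y⁴ + 1 is a perfect square is y = 1. -/
import Mathlib

lemma pow_of_coprime_mul {a b c k : ℕ} (h : Nat.Coprime a b) (heq : a * b = c ^ k) :
    ∃ d, a = d ^ k :=
  exists_eq_pow_of_mul_eq_pow (by rw [Nat.isUnit_iff]; exact h) heq

/-- No positive solutions to x^4 + w^2 = z^4. -/
theorem no_fermat44 : ∀ z x w : ℕ, 0 < x → 0 < w → x ^ 4 + w ^ 2 ≠ z ^ 4 := by
  intro z
  induction z using Nat.strong_induction_on with
  | _ z IH =>
  intro x w hx hw heq
  have hzpos : 0 < z := by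
    rcases Nat.eq_zero_or_pos z with rfl | h
    · simp at heq; omega
    · exact h
  by_cases hg : Nat.gcd x z = 1
  · -- coprime case
    have hcxw : Nat.Coprime x w := by
      by_contra hnc
      obtain ⟨p, hp, hpx, hpw⟩ := Nat.Prime.not_coprime_iff_dvd.mp hnc
      have hpz4 : p ∣ z ^ 4 := by
        rw [← heq]
        exact dvd_add (dvd_pow hpx (by norm_num)) (dvd_pow hpw two_ne_zero)
      have hpz : p ∣ z := hp.dvd_of_dvd_pow hpz4
      have h1 : p ∣ Nat.gcd x z := Nat.dvd_gcd hpx hpz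
      rw [hg] at h1
      exact hp.one_lt.ne' (Nat.dvd_one.mp h1)
    have heqZ : (x:ℤ) ^ 4 + (w:ℤ) ^ 2 = (z:ℤ) ^ 4 := by exact_mod_cast heq
    rcases Nat.even_or_odd x with hxe | hxo
    · -- x even
      have hxeven : x % 2 = 0 := Nat.even_iff.mp hxe
      have hwodd : w % 2 = 1 := by
        rcases Nat.even_or_odd w with hwe | hwo
        · exfalso
          have h2x : 2 ∣ x := Nat.dvd_of_mod_eq_zero hxeven
          have h2w : 2 ∣ w := hwe.two_dvd
          have h1 : (2:ℕ) ∣ 1 := hcxw ▸ Nat.dvd_gcd h2x h2w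
          omega
        · exact Nat.odd_iff.mp hwo
      have ht : PythagoreanTriple (w:ℤ) ((x:ℤ)^2) ((z:ℤ)^2) := by
        show (w:ℤ)*(w:ℤ) + (x:ℤ)^2*(x:ℤ)^2 = (z:ℤ)^2*(z:ℤ)^2
        linear_combination heqZ
      have hco' : Int.gcd (w:ℤ) ((x:ℤ)^2) = 1 := by
        rw [show ((x:ℤ)^2) = ((x^2:ℕ):ℤ) by push_cast; ring, Int.gcd_natCast_natCast]
        exact (hcxw.symm).pow_right 2
      have hpar : (w:ℤ) % 2 = 1 := by exact_mod_cast hwodd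
      obtain ⟨m, n, hw2, hx2, hz2, hmn, hpar2, hm0⟩ :=
        ht.coprime_classification' hco' hpar (by positivity)
      have hx2pos : (0:ℤ) < (x:ℤ)^2 := by positivity
      have hmpos : 0 < m := by
        rcases hm0.lt_or_eq with h | h
        · exact h
        · exfalso; rw [← h, mul_zero, zero_mul] at hx2; omega
      have hnpos : 0 < n := by
        have hmn2 : (0:ℤ) < 2*m*n := hx2 ▸ hx2pos
        have hmn3 : (0:ℤ) < m*n := by linarith
        rcases mul_pos_iff.mp hmn3 with ⟨_, h⟩ | ⟨h, _⟩
        · exact h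
        · linarith
      set M := m.natAbs with hMdef
      set N := n.natAbs with hNdef
      have hMm : (M:ℤ) = m := Int.natAbs_of_nonneg hm0
      have hNn : (N:ℤ) = n := Int.natAbs_of_nonneg hnpos.le
      have hxMN : x^2 = 2*M*N := by
        have : ((x:ℤ)^2 = 2*(M:ℤ)*(N:ℤ)) := by rw [hMm, hNn]; exact hx2
        exact_mod_cast this
      have hzMN : z^2 = M^2 + N^2 := by
        have : ((z:ℤ)^2 = (M:ℤ)^2 + (N:ℤ)^2) := by rw [hMm, hNn]; exact hz2
        exact_mod_cast this
      have hcoMN : Nat.Coprime M N := hmn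
      have hMpos : 0 < M := by rwa [← hMm, Nat.cast_pos] at hmpos
      have hNpos : 0 < N := by rwa [← hNn, Nat.cast_pos] at hnpos
      have key : ∃ s r : ℕ, 0 < r ∧ s % 2 = 1 ∧ Nat.Coprime s r ∧ z ^ 2 = s ^ 4 + 4 * r ^ 4 := by
        obtain ⟨x₀, hx0⟩ : ∃ x₀, x = 2*x₀ := ⟨x/2, by omega⟩
        rcases hpar2 with ⟨hme, hno⟩ | ⟨hmo, hne⟩
        · -- m even, n odd
          have hMe : M % 2 = 0 := by
            have : (M:ℤ) % 2 = 0 := by rw [hMm]; exact hme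
            exact_mod_cast this
          have hNo : N % 2 = 1 := by
            have : (N:ℤ) % 2 = 1 := by rw [hNn]; exact hno
            exact_mod_cast this
          obtain ⟨M₀, hM0⟩ : ∃ M₀, M = 2*M₀ := ⟨M/2, by omega⟩
          have hx0eq : M₀ * N = x₀^2 := by
            have h1 : (2*x₀)^2 = 2*(2*M₀)*N := by rw [← hx0, ← hM0]; exact hxMN
            have h2 : (2*x₀)^2 = 4*(x₀^2) := by ring
            have h3 : 2*(2*M₀)*N = 4*(M₀*N) := by ring
            omega
          have hcoM0N : Nat.Coprime M₀ N := Nat.Coprime.coprime_dvd_left ⟨2, by omega⟩ hcoMN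
          obtain ⟨r, hr⟩ := pow_of_coprime_mul hcoM0N hx0eq
          obtain ⟨s, hs⟩ := pow_of_coprime_mul hcoM0N.symm (by rw [mul_comm]; exact hx0eq)
          refine ⟨s, r, ?_, ?_, ?_, ?_⟩
          · rcases Nat.eq_zero_or_pos r with rfl | h
            · exfalso; simp at hr; omega
            · exact h
          · rcases Nat.even_or_odd s with hse | hso
            · exfalso
              have : 2 ∣ N := by rw [hs]; exact dvd_pow hse.two_dvd two_ne_zero
              omega
            · exact Nat.odd_iff.mp hso
          · have h1 : Nat.Coprime (r^2) (s^2) := by rwa [hr, hs] at hcoM0N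
            have h2 : Nat.Coprime r s :=
              Nat.Coprime.coprime_dvd_left (dvd_pow_self r two_ne_zero)
                (Nat.Coprime.coprime_dvd_right (dvd_pow_self s two_ne_zero) h1)
            exact h2.symm
          · rw [hzMN, hM0, hr, hs]; ring
        · -- m odd, n even
          have hMo : M % 2 = 1 := by
            have : (M:ℤ) % 2 = 1 := by rw [hMm]; exact hmo
            exact_mod_cast this
          have hNe : N % 2 = 0 := by
            have : (N:ℤ) % 2 = 0 := by rw [hNn]; exact hne
            exact_mod_cast this
          obtain ⟨N₀, hN0⟩ : ∃ N₀, N = 2*N₀ := ⟨N/2, by omega⟩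
          have hx0eq : M * N₀ = x₀^2 := by
            have h1 : (2*x₀)^2 = 2*M*(2*N₀) := by rw [← hx0, ← hN0]; exact hxMN
            have h2 : (2*x₀)^2 = 4*(x₀^2) := by ring
            have h3 : 2*M*(2*N₀) = 4*(M*N₀) := by ring
            omega
          have hcoMN0 : Nat.Coprime M N₀ :=
            Nat.Coprime.coprime_dvd_right ⟨2, by omega⟩ hcoMN
          obtain ⟨s, hs⟩ := pow_of_coprime_mul hcoMN0 hx0eq
          obtain ⟨r, hr⟩ := pow_of_coprime_mul hcoMN0.symm (by rw [mul_comm]; exact hx0eq)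
          refine ⟨s, r, ?_, ?_, ?_, ?_⟩
          · rcases Nat.eq_zero_or_pos r with rfl | h
            · exfalso; simp at hr; omega
            · exact h
          · rcases Nat.even_or_odd s with hse | hso
            · exfalso
              have : 2 ∣ M := by rw [hs]; exact dvd_pow hse.two_dvd two_ne_zero
              omega
            · exact Nat.odd_iff.mp hso
          · have h1 : Nat.Coprime (s^2) (r^2) := by rwa [hs, hr] at hcoMN0
            exact Nat.Coprime.coprime_dvd_left (dvd_pow_self s two_ne_zero)
              (Nat.Coprime.coprime_dvd_right (dvd_pow_self r two_ne_zero) h1)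
          · rw [hzMN, hN0, hr, hs]; ring
      obtain ⟨s, r, hrpos, hsodd, hsr, hzsr⟩ := key
      have hspos : 0 < s := by omega
      have ht2 : PythagoreanTriple ((s:ℤ)^2) (2*(r:ℤ)^2) (z:ℤ) := by
        show (s:ℤ)^2*(s:ℤ)^2 + (2*(r:ℤ)^2)*(2*(r:ℤ)^2) = (z:ℤ)*(z:ℤ)
        have hZ : (z:ℤ)^2 = (s:ℤ)^4 + 4*(r:ℤ)^4 := by exact_mod_cast hzsr
        linear_combination -hZ
      have hco2 : Int.gcd ((s:ℤ)^2) (2*(r:ℤ)^2) = 1 := by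
        rw [show ((s:ℤ)^2) = ((s^2:ℕ):ℤ) by push_cast; ring,
            show (2*(r:ℤ)^2) = ((2*r^2:ℕ):ℤ) by push_cast; ring, Int.gcd_natCast_natCast]
        have hs2 : Nat.Coprime s 2 := by
          exact Nat.coprime_two_right.mpr (Nat.odd_iff.mpr hsodd)
        exact Nat.Coprime.pow_left 2 (Nat.Coprime.mul_right hs2 (hsr.pow_right 2))
      have hpar2' : (s:ℤ)^2 % 2 = 1 := by
        have hn2 : s^2 % 2 = 1 := by rw [Nat.pow_mod, hsodd]
        exact_mod_cast hn2
      obtain ⟨e, f, hs2e, hr2e, hze, hef, hparef, he0⟩ :=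
        ht2.coprime_classification' hco2 hpar2' (by exact_mod_cast hzpos)
      have hefr : e * f = (r:ℤ)^2 := by linarith [hr2e]
      have hr2posZ : (0:ℤ) < (r:ℤ)^2 := by positivity
      have hepos : 0 < e := by
        rcases he0.lt_or_eq with h | h
        · exact h
        · exfalso; rw [← h, zero_mul] at hefr; omega
      have hfpos : 0 < f := by
        have hef2 : (0:ℤ) < e*f := hefr ▸ hr2posZ
        rcases mul_pos_iff.mp hef2 with ⟨_, h⟩ | ⟨h, _⟩
        · exact h
        · linarith
      set E := e.natAbs with hEdef
      set F := f.natAbs with hFdef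
      have hEe : (E:ℤ) = e := Int.natAbs_of_nonneg he0
      have hFf : (F:ℤ) = f := Int.natAbs_of_nonneg hfpos.le
      have hEF : E * F = r^2 := by
        have : ((E:ℤ)*(F:ℤ) = (r:ℤ)^2) := by rw [hEe, hFf]; exact hefr
        exact_mod_cast this
      have hcoEF : Nat.Coprime E F := hef
      obtain ⟨g, hg⟩ := pow_of_coprime_mul hcoEF hEF
      obtain ⟨hN2, hh⟩ := pow_of_coprime_mul hcoEF.symm (by rw [mul_comm]; exact hEF)
      have hs2N : hN2^4 + s^2 = g^4 := by
        have h1 : ((hN2:ℤ)^4 + (s:ℤ)^2 = (g:ℤ)^4) := by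
          have he2 : (e:ℤ) = (g:ℤ)^2 := by rw [← hEe, hg]; push_cast; ring
          have hf2 : (f:ℤ) = (hN2:ℤ)^2 := by rw [← hFf, hh]; push_cast; ring
          rw [show ((g:ℤ)^4) = ((g:ℤ)^2)^2 by ring, ← he2,
              show ((hN2:ℤ)^4) = ((hN2:ℤ)^2)^2 by ring, ← hf2]
          linear_combination hs2e
        exact_mod_cast h1
      have hFpos : 0 < F := by rwa [← hFf, Nat.cast_pos] at hfpos
      have hEpos : 0 < E := by rwa [← hEe, Nat.cast_pos] at hepos
      have hhpos : 0 < hN2 := by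
        rcases Nat.eq_zero_or_pos hN2 with rfl | h
        · exfalso; simp at hh; omega
        · exact h
      have hgpos : 0 < g := by
        rcases Nat.eq_zero_or_pos g with rfl | h
        · exfalso; simp at hg; omega
        · exact h
      have hgz : g < z := by
        have hzEF : z = E^2 + F^2 := by
          have : ((z:ℤ) = (E:ℤ)^2 + (F:ℤ)^2) := by rw [hEe, hFf]; exact hze
          exact_mod_cast this
        have hgE : g ≤ E := by
          calc g ≤ g^2 := Nat.le_self_pow two_ne_zero g
          _ = E := hg.symm
        have hE2 : E ≤ E^2 := Nat.le_self_pow two_ne_zero E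
        have hF2 : 0 < F^2 := by positivity
        omega
      exact IH g hgz hN2 s hhpos hspos hs2N
    · -- x odd
      have hxodd : x % 2 = 1 := Nat.odd_iff.mp hxo
      have ht : PythagoreanTriple ((x:ℤ)^2) (w:ℤ) ((z:ℤ)^2) := by
        show (x:ℤ)^2 * (x:ℤ)^2 + (w:ℤ) * (w:ℤ) = (z:ℤ)^2 * (z:ℤ)^2
        linear_combination heqZ
      have hco' : Int.gcd ((x:ℤ)^2) (w:ℤ) = 1 := by
        rw [show ((x:ℤ)^2) = ((x^2 : ℕ) : ℤ) by push_cast; ring, Int.gcd_natCast_natCast]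
        exact hcxw.pow_left 2
      have hpar : (x:ℤ)^2 % 2 = 1 := by
        have hn : x ^ 2 % 2 = 1 := by rw [Nat.pow_mod, hxodd]
        exact_mod_cast hn
      obtain ⟨m, n, hx2, hw2, hz2, hmn, hpar2, hm0⟩ :=
        ht.coprime_classification' hco' hpar (by positivity)
      set M := m.natAbs with hMdef
      set N := n.natAbs with hNdef
      have hM4 : (M:ℤ)^4 = m^4 := by rcases Int.natAbs_eq m with h | h <;> rw [h] <;> ring
      have hN4 : (N:ℤ)^4 = n^4 := by rcases Int.natAbs_eq n with h | h <;> rw [h] <;> ring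
      have hM2 : (M:ℤ)^2 = m^2 := by rcases Int.natAbs_eq m with h | h <;> rw [h] <;> ring
      have hN2 : (N:ℤ)^2 = n^2 := by rcases Int.natAbs_eq n with h | h <;> rw [h] <;> ring
      have hn0 : n ≠ 0 := by
        rintro rfl
        rw [mul_zero] at hw2
        have : w = 0 := by exact_mod_cast hw2
        omega
      have keyZ : (N:ℤ)^4 + ((x*z : ℕ):ℤ)^2 = (M:ℤ)^4 := by
        rw [hM4, hN4]; push_cast
        linear_combination ((z:ℤ)^2) * hx2 + (m^2 - n^2) * hz2
      have keyN : N^4 + (x*z)^2 = M^4 := by exact_mod_cast keyZ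
      have hNpos : 0 < N := Int.natAbs_pos.mpr hn0
      have hMz : M < z := by
        have h1 : (M:ℤ)^2 < (z:ℤ)^2 := by
          rw [hM2]
          have : 0 < n^2 := by positivity
          nlinarith [hz2]
        have h2 : M^2 < z^2 := by exact_mod_cast h1
        by_contra hcon
        push_neg at hcon
        have := Nat.pow_le_pow_left hcon 2
        omega
      exact IH M hMz N (x*z) hNpos (by positivity) keyN
  · -- non-coprime: divide out gcd
    have hgd : 0 < Nat.gcd x z := Nat.gcd_pos_of_pos_left z hx
    have hd2 : 2 ≤ Nat.gcd x z := by omega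
    set d := Nat.gcd x z with hddef
    obtain ⟨x', hx'⟩ := Nat.gcd_dvd_left x z
    obtain ⟨z', hz'⟩ := Nat.gcd_dvd_right x z
    have hd4 : d ^ 4 ∣ w ^ 2 := by
      have h1 : d ^ 4 ∣ x ^ 4 := pow_dvd_pow_of_dvd (Nat.gcd_dvd_left x z) 4
      have h2 : d ^ 4 ∣ z ^ 4 := pow_dvd_pow_of_dvd (Nat.gcd_dvd_right x z) 4
      have h3 : w ^ 2 = z ^ 4 - x ^ 4 := by omega
      rw [h3]; exact Nat.dvd_sub h2 h1
    have hdw : d ^ 2 ∣ w := by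
      refine (Nat.pow_dvd_pow_iff two_ne_zero).mp ?_
      have : (d^2)^2 = d^4 := by ring
      rwa [this]
    obtain ⟨w', hw'⟩ := hdw
    have hdZ : (d:ℤ) ≠ 0 := by exact_mod_cast hgd.ne'
    have heq' : x' ^ 4 + w' ^ 2 = z' ^ 4 := by
      have eZ : ((d:ℤ)*x')^4 + ((d:ℤ)^2*w')^2 = ((d:ℤ)*z')^4 := by
        rw [show ((d:ℤ)*x') = ((x:ℕ):ℤ) by rw [hx']; push_cast; ring,
            show ((d:ℤ)^2*w') = ((w:ℕ):ℤ) by rw [hw']; push_cast; ring,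
            show ((d:ℤ)*z') = ((z:ℕ):ℤ) by rw [hz']; push_cast; ring]
        exact_mod_cast heq
      have : (x':ℤ)^4 + (w':ℤ)^2 = (z':ℤ)^4 := by
        apply mul_left_cancel₀ (pow_ne_zero 4 hdZ)
        linear_combination eZ
      exact_mod_cast this
    have hz'pos : 0 < z' := by
      rcases Nat.eq_zero_or_pos z' with rfl | h
      · rw [mul_zero] at hz'; omega
      · exact h
    have hx'pos : 0 < x' := by
      rcases Nat.eq_zero_or_pos x' with rfl | h
      · rw [mul_zero] at hx'; omega
      · exact h
    have hw'pos : 0 < w' := by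
      rcases Nat.eq_zero_or_pos w' with rfl | h
      · rw [mul_zero] at hw'; omega
      · exact h
    have hz'lt : z' < z := by
      rw [hz']
      calc z' = 1 * z' := (one_mul z').symm
      _ < d * z' := by exact Nat.mul_lt_mul_of_lt_of_le (by omega) le_rfl hz'pos
    exact IH z' hz'lt x' w' hx'pos hw'pos heq'

theorem stmt_19 (y z : ℕ) (hy : 0 < y) (hz : 0 < z)
    (h : 8 * y ^ 4 + 1 = z ^ 2) : y = 1 := by
  have hzodd : z % 2 = 1 := by
    rcases Nat.even_or_odd z with he | ho
    · exfalso
      obtain ⟨k, rfl⟩ := he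
      have e : (k+k)^2 = 4*(k*k) := by ring
      rw [e] at h
      omega
    · exact Nat.odd_iff.mp ho
  obtain ⟨m, rfl⟩ : ∃ m, z = 2*m+1 := ⟨z/2, by omega⟩
  have e : (2*m+1)^2 = 4*(m*m) + 4*m + 1 := by ring
  rw [e] at h
  have hm2 : 2*(y^4) = m*(m+1) := by
    have e2 : m*(m+1) = m*m + m := by ring
    omega
  have hy4pos : 0 < y^4 := by positivity
  have hm1 : 1 ≤ m := by
    rcases Nat.eq_zero_or_pos m with rfl | hp
    · simp at hm2; omega
    · exact hp
  rcases Nat.even_or_odd m with hme | hmo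
  · -- m even : leads to v^4 = 2u^4 + 1, contradiction
    exfalso
    obtain ⟨a0, ha0⟩ := hme
    obtain ⟨a, rfl⟩ : ∃ a, m = 2*a := ⟨a0, by omega⟩
    have hy4 : a * (2*a+1) = y^4 := by
      have e3 : (2*a)*(2*a+1) = 2*(a*(2*a+1)) := by ring
      omega
    have hco : Nat.Coprime a (2*a+1) := by
      have h1 : Nat.gcd a (2*a+1) ∣ 1 := by
        have d1 : Nat.gcd a (2*a+1) ∣ a := Nat.gcd_dvd_left _ _
        have d2 : Nat.gcd a (2*a+1) ∣ 2*a+1 := Nat.gcd_dvd_right _ _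
        have d3 : Nat.gcd a (2*a+1) ∣ 2*a := Dvd.dvd.mul_left d1 2
        have : 2*a+1 - 2*a = 1 := by omega
        calc Nat.gcd a (2*a+1) ∣ 2*a+1 - 2*a := Nat.dvd_sub d2 d3
        _ = 1 := this
      exact Nat.dvd_one.mp h1
    obtain ⟨u, hu⟩ := pow_of_coprime_mul hco hy4
    obtain ⟨v, hv⟩ := pow_of_coprime_mul hco.symm (by rw [mul_comm]; exact hy4)
    -- hv : 2*a+1 = v^4, hu : a = u^4, a ≥ 1
    have hapos : 1 ≤ a := by omega
    have hupos : 1 ≤ u := by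
      rcases Nat.eq_zero_or_pos u with rfl | hp
      · simp at hu; omega
      · exact hp
    have hv4 : v^4 = 2*(u^4) + 1 := by omega
    have hu4 : 1 ≤ u^4 := Nat.one_le_pow _ _ hupos
    have hv2 : 2 ≤ v := by
      by_contra hcon
      push_neg at hcon
      interval_cases v <;> omega
    have hvsq : 4 ≤ v^2 := by
      calc (4:ℕ) = 2^2 := by norm_num
      _ ≤ v^2 := Nat.pow_le_pow_left hv2 2
    obtain ⟨c0, hc0⟩ : ∃ c0, v = 2*c0+1 := by
      rcases Nat.even_or_odd v with hve | hvo
      · exfalso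
        obtain ⟨k, rfl⟩ := hve
        have e4 : (k+k)^4 = 2*(8*k^4) := by ring
        omega
      · obtain ⟨k, hk⟩ := hvo
        exact ⟨k, by omega⟩
    -- s = (v^2+1)/2 odd
    obtain ⟨s, hs, hsodd⟩ : ∃ s, v^2 + 1 = 2*s ∧ s % 2 = 1 := by
      refine ⟨2*(c0*c0)+2*c0+1, ?_, by omega⟩
      rw [hc0]; ring
    obtain ⟨t, ht⟩ : ∃ t, v^2 = t + 1 := ⟨v^2 - 1, by omega⟩
    have htpos : 3 ≤ t := by omega
    have hts : u^4 = t * s := by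
      have e5 : v^4 = (v^2)*(v^2) := by ring
      rw [ht] at e5
      have e6 : (t+1)*(t+1) = t*t + 2*t + 1 := by ring
      -- 2 u^4 = t^2 + 2t = t(t+2) = t * 2s
      have e7 : t + 2 = 2*s := by omega
      have e8 : t*t + 2*t = t*(t+2) := by ring
      have e9 : t*(2*s) = 2*(t*s) := by ring
      rw [e7, e9] at e8
      omega
    have hcots : Nat.Coprime t s := by
      have d1 : Nat.gcd t s ∣ t := Nat.gcd_dvd_left _ _
      have d2 : Nat.gcd t s ∣ s := Nat.gcd_dvd_right _ _
      have d3 : Nat.gcd t s ∣ 2*s := Dvd.dvd.mul_left d2 2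
      have d4 : Nat.gcd t s ∣ 2 := by
        have e10 : 2*s - t = 2 := by omega
        calc Nat.gcd t s ∣ 2*s - t := Nat.dvd_sub d3 d1
        _ = 2 := e10
      have := (Nat.dvd_prime Nat.prime_two).mp d4
      rcases this with h1 | h2
      · exact h1
      · exfalso
        have : (2:ℕ) ∣ s := h2 ▸ d2
        omega
    obtain ⟨c, hc⟩ := pow_of_coprime_mul hcots hts.symm
    -- t = c^4, v^2 = c^4 + 1
    have hcpos : 1 ≤ c := by
      rcases Nat.eq_zero_or_pos c with rfl | hp
      · simp at hc; omega
      · exact hp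
    have hveq : v^2 = c^4 + 1 := by omega
    have hlow : (c^2)^2 < v^2 := by
      have : (c^2)^2 = c^4 := by ring
      omega
    have hhigh : v^2 < (c^2+1)^2 := by
      have e11 : (c^2+1)^2 = c^4 + 2*c^2 + 1 := by ring
      have : 1 ≤ c^2 := Nat.one_le_pow _ _ hcpos
      omega
    have h1 : c^2 < v := (Nat.pow_lt_pow_iff_left two_ne_zero).mp hlow
    have h2 : v < c^2 + 1 := (Nat.pow_lt_pow_iff_left two_ne_zero).mp hhigh
    omega
  · -- m odd : u^4 + 1 = 2 v^4
    obtain ⟨k0, hk0⟩ := hmo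
    obtain ⟨b, hb⟩ : ∃ b, m + 1 = 2*b := ⟨k0+1, by omega⟩
    have hy4 : m * b = y^4 := by
      have e3 : m*(2*b) = 2*(m*b) := by ring
      rw [hb] at hm2
      omega
    have hcomb : Nat.Coprime m b := by
      have d1 : Nat.gcd m b ∣ m := Nat.gcd_dvd_left _ _
      have d2 : Nat.gcd m b ∣ b := Nat.gcd_dvd_right _ _
      have d3 : Nat.gcd m b ∣ 2*b := Dvd.dvd.mul_left d2 2
      have d4 : Nat.gcd m b ∣ 1 := by
        have e10 : 2*b - m = 1 := by omega
        calc Nat.gcd m b ∣ 2*b - m := Nat.dvd_sub d3 d1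
        _ = 1 := e10
      exact Nat.dvd_one.mp d4
    obtain ⟨u, hu⟩ := pow_of_coprime_mul hcomb hy4
    obtain ⟨v, hv⟩ := pow_of_coprime_mul hcomb.symm (by rw [mul_comm]; exact hy4)
    -- hu : m = u^4, hv : b = v^4, u^4 + 1 = 2 v^4
    have hupos : 1 ≤ u := by
      rcases Nat.eq_zero_or_pos u with rfl | hp
      · simp at hu; omega
      · exact hp
    rcases Nat.eq_or_lt_of_le hupos with hu1 | hu2
    · -- u = 1 : m = 1, y = 1
      have hm1' : m = 1 := by rw [hu, ← hu1]; norm_num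
      have hy1 : y^4 = 1 := by
        subst hm1'
        omega
      by_contra hne
      have hy2 : 2 ≤ y := by omega
      have : 2^4 ≤ y^4 := Nat.pow_le_pow_left hy2 4
      omega
    · -- u ≥ 2 : contradiction via no_fermat44
      exfalso
      have hu4 : 16 ≤ u^4 := by
        calc (16:ℕ) = 2^4 := by norm_num
        _ ≤ u^4 := Nat.pow_le_pow_left hu2 4
      have hv4 : 2*(v^4) = u^4 + 1 := by omega
      obtain ⟨W, hW1, hW2⟩ : ∃ W, v^4 = W + 1 ∧ 1 ≤ W := ⟨v^4 - 1, by omega, by omega⟩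
      have key : u^4 + W^2 = (v^2)^4 := by
        have e1 : (v^2)^4 = (v^4)^2 := by ring
        rw [e1, hW1]
        have e2 : (W+1)^2 = W^2 + 2*W + 1 := by ring
        rw [e2]
        omega
      exact no_fermat44 (v^2) u W (by omega) (by omega) key
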